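/- Let V = k·e ⊕ V' be a finite-dimensional vector space over a field k of characteristic ≠ 2, with e ≠ 0. For x ∈ V' and y ∈ ⋀²V', the 2-vector e ∧ x + y ∈ ⋀²V is decomposable if and only if x ∧ y = 0 in ⋀³V' and y ∧ y = 0 in ⋀⁴V'. -/

import Mathlib

set_option maxHeartbeats 1000000

open ExteriorAlgebra

namespace Stmt3Aux

open CliffordAlgebra (contractLeft involute)

variable {k : Type*} [Field k] {M N : Type*} [AddCommGroup M] [Module k M]
  [AddCommGroup N] [Module k N]

lemma ι_swap (p q : M) : ι k p * ι k q = -(ι k q * ι k p) :=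
  eq_neg_of_add_eq_zero_left (ι_add_mul_swap p q)

lemma contract_mul (f : Module.Dual k M) (a w : ExteriorAlgebra k M) :
    contractLeft f (a * w)
      = contractLeft f a * w + involute a * contractLeft f w := by
  induction a using ExteriorAlgebra.induction generalizing w with
  | algebraMap r =>
      simp [CliffordAlgebra.contractLeft_algebraMap_mul, CliffordAlgebra.contractLeft_algebraMap,
        Algebra.smul_def]
  | ι m =>
      simp [CliffordAlgebra.contractLeft_ι_mul, CliffordAlgebra.contractLeft_ι,
        CliffordAlgebra.involute_ι, Algebra.smul_def, sub_eq_add_neg]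
  | mul a b ha hb =>
      rw [mul_assoc, ha, hb, ha b, map_mul]
      noncomm_ring
  | add a b ha hb =>
      simp only [add_mul, map_add, ha, hb]
      abel

lemma contract_map_eq_zero (g : M →ₗ[k] N) (f : Module.Dual k N) (hfg : ∀ m, f (g m) = 0)
    (z : ExteriorAlgebra k M) : contractLeft f (ExteriorAlgebra.map g z) = 0 := by
  induction z using ExteriorAlgebra.induction with
  | algebraMap r => rw [AlgHom.commutes, CliffordAlgebra.contractLeft_algebraMap]
  | ι m => rw [map_apply_ι, CliffordAlgebra.contractLeft_ι, hfg, map_zero]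
  | mul a b ha hb => rw [map_mul, contract_mul, ha, hb, zero_mul, mul_zero, add_zero]
  | add a b ha hb => rw [map_add, map_add, ha, hb, add_zero]

lemma ιMulti_two (v : Fin 2 → M) : ιMulti k 2 v = ι k (v 0) * ι k (v 1) := by
  simp [ιMulti_succ_apply, ιMulti_zero_apply, Matrix.vecTail]

lemma even_prop {y : ExteriorAlgebra k M} (hy : y ∈ ⋀[k]^2 M) :
    involute y = y ∧ ∀ m, ι k m * y = y * ι k m := by
  rw [← ιMulti_span_fixedDegree] at hy
  induction hy using Submodule.span_induction with
  | mem z hz =>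
      obtain ⟨v, rfl⟩ := hz
      rw [ιMulti_two]
      constructor
      · simp [CliffordAlgebra.involute_ι]
      · intro m
        rw [← mul_assoc, ι_swap m (v 0), neg_mul, mul_assoc, ι_swap m (v 1), mul_neg, neg_neg,
          mul_assoc]
  | zero => simp
  | add a b _ _ ha hb =>
      exact ⟨by rw [map_add, ha.1, hb.1], fun m => by rw [mul_add, add_mul, ha.2, hb.2]⟩
  | smul r a _ ha =>
      exact ⟨by rw [map_smul, ha.1], fun m => by rw [mul_smul_comm, smul_mul_assoc, ha.2]⟩

lemma map_mem_two (g : M →ₗ[k] N) {y : ExteriorAlgebra k M} (hy : y ∈ ⋀[k]^2 M) :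
    ExteriorAlgebra.map g y ∈ ⋀[k]^2 N := by
  rw [← ιMulti_span_fixedDegree] at hy
  induction hy using Submodule.span_induction with
  | mem z hz =>
      obtain ⟨v, rfl⟩ := hz
      rw [map_apply_ιMulti]
      exact ιMulti_range k 2 ⟨_, rfl⟩
  | zero => simp
  | add a b _ _ ha hb => rw [map_add]; exact Submodule.add_mem _ ha hb
  | smul r a _ ha => rw [map_smul]; exact Submodule.smul_mem _ _ ha

lemma contract_two_eq_ι (f : Module.Dual k M) {y : ExteriorAlgebra k M} (hy : y ∈ ⋀[k]^2 M) :
    ∃ c : M, contractLeft f y = ι k c := by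
  rw [← ιMulti_span_fixedDegree] at hy
  induction hy using Submodule.span_induction with
  | mem z hz =>
      obtain ⟨v, rfl⟩ := hz
      refine ⟨f (v 0) • v 1 - f (v 1) • v 0, ?_⟩
      rw [ιMulti_two, CliffordAlgebra.contractLeft_ι_mul, CliffordAlgebra.contractLeft_ι,
        ← Algebra.commutes, ← Algebra.smul_def]
      rw [map_sub, map_smul, map_smul]
  | zero => exact ⟨0, by simp⟩
  | add a b _ _ ha hb =>
      obtain ⟨c, hc⟩ := ha; obtain ⟨d, hd⟩ := hb
      exact ⟨c + d, by rw [map_add, hc, hd, map_add]⟩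
  | smul r a _ ha =>
      obtain ⟨c, hc⟩ := ha
      exact ⟨r • c, by rw [map_smul, hc, map_smul]⟩

lemma repr_two {n : ℕ} (b : Module.Basis (Fin n) k M) {y : ExteriorAlgebra k M} (hy : y ∈ ⋀[k]^2 M) :
    ∃ c : Fin n × Fin n → k,
      y = ∑ p : Fin n × Fin n, c p • (ι k (b p.1) * ι k (b p.2)) := by
  rw [← ιMulti_span_fixedDegree] at hy
  induction hy using Submodule.span_induction with
  | mem z hz =>
      obtain ⟨v, rfl⟩ := hz
      refine ⟨fun p => b.repr (v 0) p.1 * b.repr (v 1) p.2, ?_⟩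
      rw [ιMulti_two]
      conv_lhs => rw [← b.sum_repr (v 0), ← b.sum_repr (v 1)]
      rw [map_sum, map_sum, Finset.sum_mul_sum, Fintype.sum_prod_type]
      simp only [smul_mul_smul_comm, map_smul]
  | zero => exact ⟨0, by simp⟩
  | add a c _ _ ha hc =>
      obtain ⟨u, hu⟩ := ha; obtain ⟨w, hw⟩ := hc
      exact ⟨u + w, by rw [hu, hw, ← Finset.sum_add_distrib]; simp [add_smul]⟩
  | smul r a _ ha =>
      obtain ⟨u, hu⟩ := ha
      exact ⟨r • u, by rw [hu, Finset.smul_sum]; simp [mul_smul]⟩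

lemma exists_contract_ne_zero (h2 : (2:k) ≠ 0) [FiniteDimensional k M]
    {y : ExteriorAlgebra k M} (hy : y ∈ ⋀[k]^2 M) (hy0 : y ≠ 0) :
    ∃ f : Module.Dual k M, contractLeft f y ≠ 0 := by
  by_contra h
  push_neg at h
  set b := Module.finBasis k M with hb
  obtain ⟨c, hc⟩ := repr_two b hy
  have hsym : ∀ p q, c (p, q) = c (q, p) := by
    intro p q
    have h0 := h (b.coord p)
    rw [hc, map_sum] at h0
    have hterm : ∀ r : Fin _ × Fin _,
        contractLeft (b.coord p) (c r • (ι k (b r.1) * ι k (b r.2)))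
          = ι k (((if r.1 = p then c r else 0) • b r.2)
              - ((if r.2 = p then c r else 0) • b r.1)) := by
      intro r
      rw [map_smul, CliffordAlgebra.contractLeft_ι_mul, CliffordAlgebra.contractLeft_ι,
        ← Algebra.commutes, ← Algebra.smul_def]
      simp only [Module.Basis.coord_apply, Module.Basis.repr_self, Finsupp.single_apply]
      split_ifs <;> simp [smul_sub, smul_smul]
    simp only [hterm] at h0
    rw [← map_sum, ι_eq_zero_iff] at h0
    have h2' := congrArg (fun z => b.repr z q) h0
    simp only [map_sum, map_sub, map_smul, Module.Basis.repr_self, Finsupp.coe_sub, Finsupp.coe_smul,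
      Finsupp.single_apply, Pi.sub_apply, Pi.smul_apply, smul_eq_mul,
      Finsupp.coe_zero, Pi.zero_apply, Fintype.sum_prod_type] at h2'
    simpa [Finsupp.single_apply, Finset.sum_sub_distrib, mul_ite, Finset.sum_ite_eq,
      Finset.sum_ite_eq', sub_eq_zero] using h2'
  have hclaim : ∀ p : Fin _ × Fin _,
      c p.swap • (ι k (b p.swap.1) * ι k (b p.swap.2))
        = -(c p • (ι k (b p.1) * ι k (b p.2))) := by
    intro p
    rw [Prod.fst_swap, Prod.snd_swap, ι_swap,
      show c p.swap = c p from by rw [show p.swap = (p.2, p.1) from rfl, hsym p.2 p.1]]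
    simp
  have e1 : y = ∑ p : Fin _ × Fin _, c p.swap • (ι k (b p.swap.1) * ι k (b p.swap.2)) :=
    hc.trans (Equiv.sum_comp (Equiv.prodComm _ _)
      (fun p => c p • (ι k (b p.1) * ι k (b p.2)))).symm
  have h20 : (2:k) • y = 0 := by
    rw [two_smul]
    nth_rewrite 1 [e1]
    rw [Finset.sum_congr rfl (fun p _ => hclaim p), Finset.sum_neg_distrib, ← hc,
      neg_add_cancel]
  rcases smul_eq_zero.mp h20 with h' | h'
  · exact h2 h'
  · exact hy0 h'

lemma exists_dual_family {n : ℕ} {v : Fin n → M} (hv : LinearIndependent k v) :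
    ∃ f : Fin n → Module.Dual k M, ∀ i j, f i (v j) = if j = i then 1 else 0 := by
  obtain ⟨q, hq⟩ := Submodule.exists_isCompl (Submodule.span k (Set.range v))
  set pr := Submodule.linearProjOfIsCompl _ q hq with hpr
  refine ⟨fun i => ((Module.Basis.span hv).coord i).comp pr, fun i j => ?_⟩
  have hmem : v j ∈ Submodule.span k (Set.range v) := Submodule.subset_span ⟨j, rfl⟩
  have hprv : pr (v j) = ⟨v j, hmem⟩ := Submodule.linearProjOfIsCompl_apply_left hq ⟨v j, hmem⟩
  have hb : (⟨v j, hmem⟩ : Submodule.span k (Set.range v)) = Module.Basis.span hv j :=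
    (Module.Basis.span_apply hv j).symm
  simp [hprv, hb, Module.Basis.coord_apply, Module.Basis.repr_self, Finsupp.single_apply,
    -Module.Basis.span_apply]

lemma wedge_three_ne_zero {v : Fin 3 → M} (hv : LinearIndependent k v) :
    ι k (v 0) * (ι k (v 1) * ι k (v 2)) ≠ 0 := by
  obtain ⟨f, hf⟩ := exists_dual_family hv
  set φ : M [⋀^Fin 3]→ₗ[k] k :=
    (Matrix.detRowAlternating : (Fin 3 → k) [⋀^Fin 3]→ₗ[k] k).compLinearMap (LinearMap.pi f)
    with hφ
  intro h0
  have h1 : ιMulti k 3 v = ι k (v 0) * (ι k (v 1) * ι k (v 2)) := by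
    simp [ιMulti_succ_apply, ιMulti_zero_apply, Matrix.vecTail, mul_assoc]
  have h2 := congrArg (liftAlternating (R := k) (M := M) (N := k)
    (Function.update (fun _ => 0) 3 φ)) (h1.trans h0)
  rw [liftAlternating_apply_ιMulti, map_zero, Function.update_self] at h2
  have h3 : φ v = 1 := by
    rw [hφ]
    have hone : (fun i => (LinearMap.pi f) (v i)) = (1 : Matrix (Fin 3) (Fin 3) k) := by
      funext i j
      simp [LinearMap.pi_apply, hf j i, Matrix.one_apply, eq_comm]
    simp only [AlternatingMap.compLinearMap_apply]
    rw [hone]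
    exact Matrix.det_one
  rw [h3] at h2
  exact one_ne_zero h2

end Stmt3Aux

open Stmt3Aux
open CliffordAlgebra (contractLeft involute)

/-- For `V = k·e ⊕ V'` (modelled as `k × V'` with `e = (1,0)`), `x ∈ V'` and
`y ∈ ⋀²V'`, the 2-vector `e ∧ x + y ∈ ⋀²V` is decomposable iff `x ∧ y = 0` in `⋀³V'`
and `y ∧ y = 0` in `⋀⁴V'`. -/
theorem stmt3 (k : Type*) [Field k] (h2 : (2 : k) ≠ 0) (V' : Type*)
    [AddCommGroup V'] [Module k V'] [FiniteDimensional k V']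
    (x : V') (y : ExteriorAlgebra k V') (hy : y ∈ ⋀[k]^2 V') :
    (∃ a b : k × V',
        ι k ((1 : k), (0 : V')) * ι k ((0 : k), x)
          + ExteriorAlgebra.map (LinearMap.inr k k V') y = ι k a * ι k b) ↔
      (ι k x * y = 0 ∧ y * y = 0) := by
  set J : ExteriorAlgebra k V' →ₐ[k] ExteriorAlgebra k (k × V') :=
    ExteriorAlgebra.map (LinearMap.inr k k V') with hJ
  set e : ExteriorAlgebra k (k × V') := ι k ((1:k),(0:V')) with he
  set X : ExteriorAlgebra k (k × V') := ι k ((0:k), x) with hX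
  have hJinj : Function.Injective J := by
    have hcomp : (ExteriorAlgebra.map (LinearMap.snd k k V')).comp J = AlgHom.id k _ := by
      rw [hJ, ExteriorAlgebra.map_comp_map,
        show (LinearMap.snd k k V') ∘ₗ (LinearMap.inr k k V') = LinearMap.id from
          LinearMap.ext fun m => rfl]
      exact ExteriorAlgebra.map_id
    intro u w huw
    have h := congrArg (ExteriorAlgebra.map (LinearMap.snd k k V')) huw
    rwa [← AlgHom.comp_apply, ← AlgHom.comp_apply, hcomp, AlgHom.id_apply, AlgHom.id_apply] at h
  have hXJ : X = J (ι k x) := by rw [hJ, map_apply_ι]; rfl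
  have hcommJ : ∀ m : k × V', ι k m * J y = J y * ι k m :=
    (even_prop (map_mem_two _ hy)).2
  constructor
  · rintro ⟨a, b, hab⟩
    have hsq : ∀ (P Q : k × V'), (ι k P * ι k Q) * (ι k P * ι k Q) = 0 := by
      intro P Q
      rw [mul_assoc, ← mul_assoc (ι k Q) (ι k P) (ι k Q), ι_swap Q P]
      simp [mul_assoc, neg_mul, ι_sq_zero]
    have hsq0 : (e * X + J y) * (e * X + J y) = 0 := by rw [hab]; exact hsq a b
    have hT1 : (e * X) * (e * X) = 0 := hsq _ _
    have hT3 : J y * (e * X) = (e * X) * J y := by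
      rw [← mul_assoc, ← hcommJ ((1:k),(0:V')), mul_assoc, ← hcommJ ((0:k), x), ← mul_assoc]
    have hexpand : (e * X + J y) * (e * X + J y)
        = (e*X)*(e*X) + J y*(e*X) + ((e*X)*(J y) + J y*(J y)) := by
      rw [mul_add, add_mul, add_mul]
    rw [hexpand, hT1, hT3, zero_add, ← map_mul J y y] at hsq0
    have hEW : (e*X)*(J y) = e * J (ι k x * y) := by rw [mul_assoc, hXJ, ← map_mul J (ι k x) y]
    rw [hEW, ← add_assoc] at hsq0
    set F : Module.Dual k (k × V') := LinearMap.fst k k V' with hF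
    have hDJ : ∀ z, contractLeft F (J z) = 0 := fun z =>
      contract_map_eq_zero _ _ (fun m => rfl) z
    have hD := congrArg (contractLeft F) hsq0
    rw [map_zero, map_add, map_add, he, CliffordAlgebra.contractLeft_ι_mul,
      hDJ, hDJ] at hD
    simp only [mul_zero, sub_zero, add_zero] at hD
    have hF1 : F ((1:k),(0:V')) = 1 := rfl
    rw [hF1, one_smul, ← map_add] at hD
    have hxy : ι k x * y + ι k x * y = 0 := hJinj (hD.trans (map_zero J).symm)
    have hxy0 : ι k x * y = 0 := by
      have h20 : (2:k) • (ι k x * y) = 0 := by rw [two_smul]; exact hxy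
      rcases smul_eq_zero.mp h20 with h' | h'
      · exact absurd h' h2
      · exact h'
    refine ⟨hxy0, ?_⟩
    rw [hxy0, map_zero, mul_zero, add_zero, zero_add] at hsq0
    exact hJinj (hsq0.trans (map_zero J).symm)
  · rintro ⟨hx, hyy⟩
    by_cases hy0 : y = 0
    · exact ⟨((1:k),(0:V')), ((0:k), x), by rw [hy0, map_zero, add_zero]⟩
    obtain ⟨f, hf⟩ := exists_contract_ne_zero h2 hy hy0
    obtain ⟨c, hcdef⟩ := contract_two_eq_ι f hy
    have hc0 : c ≠ 0 := by
      rintro rfl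
      exact hf (hcdef.trans (map_zero _))
    have hev := even_prop hy
    have hcy : ι k c * y = 0 := by
      have h0 : contractLeft f (y * y) = 0 := by rw [hyy, map_zero]
      rw [contract_mul, hcdef, hev.1, ← hev.2 c] at h0
      have h20 : (2:k) • (ι k c * y) = 0 := by rw [two_smul]; exact h0
      rcases smul_eq_zero.mp h20 with h' | h'
      · exact absurd h' h2
      · exact h'
    obtain ⟨g, hg⟩ : ∃ g : Module.Dual k V', g c ≠ 0 := by
      by_contra hng
      push_neg at hng
      exact hc0 ((Module.forall_dual_apply_eq_zero_iff k c).mp hng)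
    obtain ⟨d0, hd0⟩ := contract_two_eq_ι g hy
    have key : g c • y = ι k c * ι k d0 := by
      have h1 := congrArg (contractLeft g) hcy
      rw [map_zero, CliffordAlgebra.contractLeft_ι_mul, hd0] at h1
      exact sub_eq_zero.mp h1
    obtain ⟨d', hd'⟩ : ∃ d' : V', d' = (g c)⁻¹ • d0 := ⟨_, rfl⟩
    have hyeq : y = ι k c * ι k d' := by
      rw [hd', map_smul, mul_smul_comm, ← key, smul_smul, inv_mul_cancel₀ hg, one_smul]
    have hxmem : x ∈ Submodule.span k {c, d'} := by
      by_contra hxm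
      have hd'0 : d' ≠ 0 := by
        intro hz
        rw [hz, map_zero, mul_zero] at hyeq
        exact hy0 hyeq
      have hcd : c ∉ Submodule.span k (Set.range ![d']) := by
        intro hmem
        rw [show Set.range ![d'] = {d'} by simp] at hmem
        obtain ⟨t, ht⟩ := Submodule.mem_span_singleton.mp hmem
        rw [← ht, map_smul, smul_mul_assoc, ι_sq_zero, smul_zero] at hyeq
        exact hy0 hyeq
      have h1 : LinearIndependent k ![d'] := linearIndependent_unique_iff.mpr (by simpa using hd'0)
      have h2' : LinearIndependent k ![c, d'] := by
        rw [show (![c, d'] : Fin 2 → V') = Fin.cons c ![d'] from rfl]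
        exact linearIndependent_fin_cons.mpr ⟨h1, hcd⟩
      have h3 : LinearIndependent k ![x, c, d'] := by
        rw [show (![x, c, d'] : Fin 3 → V') = Fin.cons x ![c, d'] from rfl]
        refine linearIndependent_fin_cons.mpr ⟨h2', ?_⟩
        rwa [show Set.range ![c, d'] = {c, d'} by simp [Matrix.range_cons, Matrix.range_empty, Set.pair_comm]]
      refine wedge_three_ne_zero h3 ?_
      show ι k (![x, c, d'] 0) * (ι k (![x, c, d'] 1) * ι k (![x, c, d'] 2)) = 0
      simp only [Matrix.cons_val_zero, Matrix.cons_val_one, Matrix.head_cons]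
      rw [show (![x, c, d'] 2) = d' from rfl, ← hyeq]
      exact hx
    obtain ⟨α, β, hab⟩ := Submodule.mem_span_pair.mp hxmem
    refine ⟨((β, c) : k × V'), ((-α, d') : k × V'), ?_⟩
    have hJy : J y = ι k ((0:k), c) * ι k ((0:k), d') := by
      rw [hyeq, map_mul, hJ, map_apply_ι, map_apply_ι]; rfl
    have hsplit : (((0:k), x) : k × V') = α • ((0:k), c) + β • ((0:k), d') := by
      rw [← hab]; simp [Prod.ext_iff]
    have h1 : (((β, c)) : k × V') = β • ((1:k),(0:V')) + ((0:k), c) := by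
      simp [Prod.ext_iff]
    have h2'' : (((-α, d')) : k × V') = (-α) • ((1:k),(0:V')) + ((0:k), d') := by
      simp [Prod.ext_iff]
    have hCE : ι k ((0:k), c) * ι k ((1:k),(0:V'))
        = -(ι k ((1:k),(0:V')) * ι k ((0:k), c)) := ι_swap _ _
    have hEE : ι k ((1:k),(0:V')) * ι k ((1:k),(0:V')) = 0 := ι_sq_zero _
    rw [hJy, hX, he, hsplit, h1, h2'']
    simp only [map_add, map_smul]
    simp only [mul_add, add_mul, smul_mul_assoc, mul_smul_comm]
    rw [hEE, hCE]
    simp only [smul_zero, smul_neg, neg_smul, neg_neg, add_zero, zero_add]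
    abel
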